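/- arXiv:2210.14671 — 3 statements merged into one kernel-verified Lean document; each statement's English description precedes it below -/
import Mathlib

section
/- For PSD matrices, the Bures-Wasserstein distance between an arbitrary PSD matrix Σ and a rank-one matrix ww^T satisfies d_BW^2(Σ, ww^T) = Tr(Σ) + ‖w‖² − 2·√(w^T Σ w). -/
open Matrix

/-- The positive semidefinite square root of a positive semidefinite matrix, as defined in the
older Mathlib (`Matrix.PosSemidef.sqrt`, since removed). -/
noncomputable def Matrix.PosSemidef.sqrt {n : Type*} [Fintype n] [DecidableEq n]
    {A : Matrix n n ℝ} (hA : A.PosSemidef) : Matrix n n ℝ :=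
  hA.1.eigenvectorUnitary.1 * diagonal ((↑) ∘ (fun x => Real.sqrt x) ∘ hA.1.eigenvalues) *
    (star hA.1.eigenvectorUnitary : Matrix n n ℝ)

open scoped MatrixOrder in
lemma Matrix.PosSemidef.sqrt_eq_cfcSqrt {n : Type*} [Fintype n] [DecidableEq n]
    {A : Matrix n n ℝ} (hA : A.PosSemidef) : hA.sqrt = CFC.sqrt A := by
  rw [CFC.sqrt_eq_real_sqrt A hA.nonneg, cfcₙ_eq_cfc (hf0 := by simp), hA.1.cfc_eq]
  rfl

open scoped MatrixOrder in
lemma Matrix.PosSemidef.posSemidef_sqrt {n : Type*} [Fintype n] [DecidableEq n]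
    {A : Matrix n n ℝ} (hA : A.PosSemidef) : hA.sqrt.PosSemidef := by
  rw [hA.sqrt_eq_cfcSqrt]
  exact (CFC.sqrt_nonneg A).posSemidef

open scoped MatrixOrder in
lemma Matrix.PosSemidef.sqrt_mul_self {n : Type*} [Fintype n] [DecidableEq n]
    {A : Matrix n n ℝ} (hA : A.PosSemidef) : hA.sqrt * hA.sqrt = A := by
  rw [hA.sqrt_eq_cfcSqrt]
  exact CFC.sqrt_mul_sqrt_self A hA.nonneg

open scoped MatrixOrder in
lemma Matrix.PosSemidef.eq_sqrt_of_sq_eq {n : Type*} [Fintype n] [DecidableEq n]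
    {A : Matrix n n ℝ} (hA : A.PosSemidef) {B : Matrix n n ℝ} (hB : B.PosSemidef)
    (h : A ^ 2 = B) : A = hB.sqrt := by
  rw [hB.sqrt_eq_cfcSqrt]
  exact (CFC.sqrt_unique (by rw [← sq]; exact h) hA.nonneg).symm

section aux

variable {d : ℕ}

lemma aux_mul_vecMulVec_mul (A : Matrix (Fin d) (Fin d) ℝ) (hA : Aᵀ = A)
    (w : Fin d → ℝ) :
    A * vecMulVec w w * A = vecMulVec (A *ᵥ w) (A *ᵥ w) := by
  have hsym : ∀ a b, A a b = A b a := fun a b => by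
    simpa using congrFun (congrFun hA b) a
  ext i j
  simp only [mul_apply, vecMulVec_apply, mulVec, dotProduct, Finset.sum_mul,
    Finset.mul_sum]
  refine Finset.sum_congr rfl fun k _ => Finset.sum_congr rfl fun l _ => ?_
  rw [hsym k j]
  ring

lemma aux_vecMulVec_posSemidef (v : Fin d → ℝ) : (vecMulVec v v).PosSemidef := by
  refine Matrix.PosSemidef.of_dotProduct_mulVec_nonneg ?_ ?_
  · ext i j
    simp [vecMulVec_apply, mul_comm, Matrix.IsHermitian]
  · intro x
    have h : star x ⬝ᵥ (vecMulVec v v *ᵥ x) = (v ⬝ᵥ x) * (v ⬝ᵥ x) := by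
      simp only [dotProduct, mulVec, vecMulVec_apply, star_trivial,
        Finset.sum_mul, Finset.mul_sum]
      refine Finset.sum_congr rfl fun i _ => Finset.sum_congr rfl fun j _ => ?_
      ring
    rw [h]
    exact mul_self_nonneg _

lemma aux_smul_posSemidef (c : ℝ) (hc : 0 ≤ c) {M : Matrix (Fin d) (Fin d) ℝ}
    (hM : M.PosSemidef) : (c • M).PosSemidef := by
  refine Matrix.PosSemidef.of_dotProduct_mulVec_nonneg ?_ ?_
  · have := hM.1
    unfold Matrix.IsHermitian at *
    rw [conjTranspose_smul, this]
    simp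
  · intro x
    rw [smul_mulVec, dotProduct_smul, smul_eq_mul]
    exact mul_nonneg hc (hM.dotProduct_mulVec_nonneg x)

lemma aux_vecMulVec_sq (v : Fin d → ℝ) :
    vecMulVec v v * vecMulVec v v = (v ⬝ᵥ v) • vecMulVec v v := by
  ext i j
  simp only [mul_apply, vecMulVec_apply, Matrix.smul_apply, smul_eq_mul, dotProduct]
  rw [Finset.sum_mul]
  congr 1; ext k; ring

lemma aux_trace_vecMulVec (v : Fin d → ℝ) : (vecMulVec v v).trace = v ⬝ᵥ v := by
  simp [Matrix.trace, Matrix.diag, vecMulVec_apply, dotProduct]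

end aux

/-- For a PSD matrix `Σ` and a vector `w`, if `B` is the PSD square root of
`Σ^{1/2} (w wᵀ) Σ^{1/2}`, then
`d_BW²(Σ, wwᵀ) = Tr(Σ + wwᵀ - 2B) = Tr Σ + ‖w‖² - 2 √(wᵀ Σ w)`. -/
theorem stmt0 {d : ℕ} (S : Matrix (Fin d) (Fin d) ℝ) (hS : S.PosSemidef)
    (w : Fin d → ℝ) (B : Matrix (Fin d) (Fin d) ℝ) (hB : B.PosSemidef)
    (hBB : B * B = hS.sqrt * (vecMulVec w w) * hS.sqrt) :
    (S + vecMulVec w w - (2 : ℝ) • B).trace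
      = S.trace + w ⬝ᵥ w - 2 * Real.sqrt (w ⬝ᵥ (S *ᵥ w)) := by
  set Q := hS.sqrt with hQ
  have hQsymm : Qᵀ = Q := hS.posSemidef_sqrt.1
  set v : Fin d → ℝ := Q *ᵥ w with hv
  have hBB' : B * B = vecMulVec v v := by
    rw [hBB, aux_mul_vecMulVec_mul Q hQsymm w]
  have hSw : w ⬝ᵥ (S *ᵥ w) = v ⬝ᵥ v := by
    have hSS : S = Q * Q := (hS.sqrt_mul_self).symm
    rw [hSS, ← mulVec_mulVec, dotProduct_mulVec w Q (Q *ᵥ w)]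
    congr 1
    rw [← hQsymm, vecMul_transpose]
  have hTrB : B.trace = Real.sqrt (v ⬝ᵥ v) := by
    by_cases hz : v ⬝ᵥ v = 0
    · have hv0 : v = 0 := dotProduct_self_eq_zero.mp hz
      have hB0 : B = 0 := by
        have h0 : (0 : Matrix (Fin d) (Fin d) ℝ).PosSemidef := Matrix.PosSemidef.zero
        have e1 : B = h0.sqrt := hB.eq_sqrt_of_sq_eq h0 (by
          rw [sq, hBB', hv0]; ext i j; simp [vecMulVec_apply])
        have e2 : (0 : Matrix (Fin d) (Fin d) ℝ) = h0.sqrt :=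
          h0.eq_sqrt_of_sq_eq h0 (by simp [sq])
        rw [e1, ← e2]
      rw [hB0, hz, Real.sqrt_zero, trace_zero]
    · have hnn : 0 ≤ v ⬝ᵥ v := by
        have := dotProduct_star_self_nonneg v
        simpa using this
      have ht : 0 < v ⬝ᵥ v := lt_of_le_of_ne hnn (Ne.symm hz)
      set t : ℝ := v ⬝ᵥ v with htdef
      have hst : Real.sqrt t * Real.sqrt t = t := Real.mul_self_sqrt hnn
      have hstpos : 0 < Real.sqrt t := Real.sqrt_pos.mpr ht
      set C : Matrix (Fin d) (Fin d) ℝ := (Real.sqrt t)⁻¹ • vecMulVec v v with hC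
      have hCpsd : C.PosSemidef :=
        aux_smul_posSemidef _ (inv_nonneg.mpr hstpos.le) (aux_vecMulVec_posSemidef v)
      have hCsq : C * C = vecMulVec v v := by
        rw [hC, smul_mul_smul_comm, aux_vecMulVec_sq, smul_smul, ← htdef]
        rw [show (Real.sqrt t)⁻¹ * (Real.sqrt t)⁻¹ * t = 1 by
          rw [← hst]; field_simp; rw [Real.sqrt_sq hstpos.le]]
        simp
      have hvv : (vecMulVec v v).PosSemidef := aux_vecMulVec_posSemidef v
      have e1 : B = hvv.sqrt := hB.eq_sqrt_of_sq_eq hvv (by rw [sq]; exact hBB')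
      have e2 : C = hvv.sqrt := hCpsd.eq_sqrt_of_sq_eq hvv (by rw [sq]; exact hCsq)
      rw [e1, ← e2, hC, trace_smul, aux_trace_vecMulVec, ← htdef, smul_eq_mul]
      rw [show t = Real.sqrt t * Real.sqrt t from hst.symm]
      field_simp
      rw [Real.sqrt_sq hstpos.le]
  rw [trace_sub, trace_add, trace_smul, aux_trace_vecMulVec, hTrB, hSw, smul_eq_mul]
end

section
/- The function Σ ↦ d_BW²(Σ, xx^T) = Tr(Σ) + ‖x‖² − 2√(x^T Σ x) is convex on the cone of PSD matrices, for any fixed x ∈ ℝ^d. -/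
open Matrix

lemma psd_smul {d : ℕ} {a : ℝ} (ha : 0 ≤ a) {S : Matrix (Fin d) (Fin d) ℝ}
    (hS : S.PosSemidef) : (a • S).PosSemidef := by
  refine Matrix.PosSemidef.of_dotProduct_mulVec_nonneg ?_ (fun y => ?_)
  · unfold Matrix.IsHermitian
    rw [conjTranspose_smul, hS.1.eq]
    simp
  · rw [smul_mulVec, dotProduct_smul]
    exact mul_nonneg ha (hS.dotProduct_mulVec_nonneg y)

/-- The function `Σ ↦ d_BW²(Σ, xxᵀ) = Tr Σ + ‖x‖² - 2√(xᵀ Σ x)` is convex on the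
cone of PSD matrices, for any fixed `x`. -/
theorem stmt8 {d : ℕ} (x : Fin d → ℝ) :
    ConvexOn ℝ {S : Matrix (Fin d) (Fin d) ℝ | S.PosSemidef}
      (fun S => S.trace + x ⬝ᵥ x - 2 * Real.sqrt (x ⬝ᵥ (S *ᵥ x))) := by
  constructor
  · intro S hS T hT a b ha hb hab
    exact ((psd_smul ha hS).add (psd_smul hb hT))
  · intro S hS T hT a b ha hb hab
    have hu : (0:ℝ) ≤ x ⬝ᵥ (S *ᵥ x) := by simpa using Matrix.PosSemidef.dotProduct_mulVec_nonneg hS x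
    have hv : (0:ℝ) ≤ x ⬝ᵥ (T *ᵥ x) := by simpa using Matrix.PosSemidef.dotProduct_mulVec_nonneg hT x
    have hsqrt : a * Real.sqrt (x ⬝ᵥ (S *ᵥ x)) + b * Real.sqrt (x ⬝ᵥ (T *ᵥ x))
        ≤ Real.sqrt (a * (x ⬝ᵥ (S *ᵥ x)) + b * (x ⬝ᵥ (T *ᵥ x))) := by
      have := (Real.strictConcaveOn_sqrt.concaveOn).2 hu hv ha hb hab
      simpa [smul_eq_mul] using this
    have hdot : x ⬝ᵥ ((a • S + b • T) *ᵥ x)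
        = a * (x ⬝ᵥ (S *ᵥ x)) + b * (x ⬝ᵥ (T *ᵥ x)) := by
      simp [add_mulVec, smul_mulVec, dotProduct_add, dotProduct_smul, smul_eq_mul]
    have htr : (a • S + b • T).trace = a * S.trace + b * T.trace := by
      simp [trace_add, trace_smul, smul_eq_mul]
    simp only [smul_eq_mul, hdot, htr]
    have hx : a * (x ⬝ᵥ x) + b * (x ⬝ᵥ x) = x ⬝ᵥ x := by rw [← add_mul, hab, one_mul]
    nlinarith [hsqrt, hx]
end

section
/- In the population setting with S = vv^T in dimension 2 (WLOG), the only fixed points u of the map u ↦ 𝔼[(|v^Tx|/|u^Tx|) xx^T u] with x ∼ N(0,I) are u = ±v and vectors orthogonal to v (of appropriate norm); in particular, any unit-direction fixed point u not orthogonal to v must be parallel to v. -/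
open Matrix MeasureTheory ProbabilityTheory
open Real

noncomputable section
namespace Stmt17

local notation "γ" => gaussianReal 0 1

lemma gauss_eq : (gaussianReal 0 1) = (volume : Measure ℝ).withDensity (gaussianPDF 0 1) :=
  gaussianReal_of_var_ne_zero 0 one_ne_zero

lemma measurable_sign : Measurable Real.sign := by
  have : Real.sign = fun r : ℝ => if r < 0 then (-1:ℝ) else if 0 < r then 1 else 0 :=
    funext fun r => rfl
  rw [this]
  exact Measurable.ite (measurableSet_lt measurable_id measurable_const) measurable_const
    (Measurable.ite (measurableSet_lt measurable_const measurable_id) measurable_const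
      measurable_const)

lemma pdf_mul (a b : ℝ) : gaussianPDFReal 0 1 a * gaussianPDFReal 0 1 b
    = ((Real.sqrt (2*π))⁻¹)^2 * Real.exp (-(a^2+b^2)/2) := by
  simp only [gaussianPDFReal, NNReal.coe_one, mul_one, sub_zero]
  rw [show -(a^2+b^2)/2 = -a^2/2 + -b^2/2 by ring, Real.exp_add]
  ring

lemma prod_gauss_eq : (gaussianReal 0 1).prod (gaussianReal 0 1)
    = (volume : Measure (ℝ×ℝ)).withDensity
        (fun p => gaussianPDF 0 1 p.1 * gaussianPDF 0 1 p.2) := by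
  refine Measure.prod_eq fun s t hs ht => ?_
  rw [withDensity_apply _ (hs.prod ht), Measure.volume_eq_prod, ← Measure.prod_restrict,
    lintegral_prod_mul (measurable_gaussianPDF 0 1).aemeasurable
      (measurable_gaussianPDF 0 1).aemeasurable,
    gauss_eq, withDensity_apply _ hs, withDensity_apply _ ht]


lemma map_withDensity {α β : Type*} [MeasurableSpace α] [MeasurableSpace β]
    (e : α ≃ᵐ β) (μ : Measure α) {f : β → ENNReal} (hf : Measurable f) :
    Measure.map e (μ.withDensity (f ∘ e)) = (Measure.map e μ).withDensity f := by
  ext s hs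
  rw [Measure.map_apply e.measurable hs, withDensity_apply _ hs,
    withDensity_apply _ (e.measurable hs),
    Measure.restrict_map e.measurable hs, lintegral_map hf e.measurable]
  rfl

def rot (c d : ℝ) (h : c^2 + d^2 = 1) : (ℝ×ℝ) ≃ᵐ (ℝ×ℝ) where
  toFun p := (c*p.1 + d*p.2, -d*p.1 + c*p.2)
  invFun q := (c*q.1 - d*q.2, d*q.1 + c*q.2)
  left_inv p := by
    have h1 : c*(c*p.1 + d*p.2) - d*(-d*p.1 + c*p.2) = p.1 := by linear_combination p.1 * h
    have h2 : d*(c*p.1 + d*p.2) + c*(-d*p.1 + c*p.2) = p.2 := by linear_combination p.2 * h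
    exact Prod.ext h1 h2
  right_inv q := by
    have h1 : c*(c*q.1 - d*q.2) + d*(d*q.1 + c*q.2) = q.1 := by linear_combination q.1 * h
    have h2 : -d*(c*q.1 - d*q.2) + c*(d*q.1 + c*q.2) = q.2 := by linear_combination q.2 * h
    exact Prod.ext h1 h2
  measurable_toFun := by
    show Measurable fun p : ℝ×ℝ => (c*p.1 + d*p.2, -d*p.1 + c*p.2)
    fun_prop
  measurable_invFun := by
    show Measurable fun q : ℝ×ℝ => (c*q.1 - d*q.2, d*q.1 + c*q.2)
    fun_prop

lemma rot_map_volume {c d : ℝ} (h : c^2 + d^2 = 1) :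
    Measure.map (rot c d h) volume = volume := by
  have hco : ⇑(rot c d h)
      = ⇑(Matrix.toLin (Module.Basis.finTwoProd ℝ) (Module.Basis.finTwoProd ℝ) !![c, d; -d, c]) := by
    funext p
    rw [Matrix.toLin_finTwoProd_apply]
    rfl
  have hdet : LinearMap.det (Matrix.toLin (Module.Basis.finTwoProd ℝ) (Module.Basis.finTwoProd ℝ)
      !![c, d; -d, c]) = 1 := by
    rw [LinearMap.det_toLin, Matrix.det_fin_two_of]
    linarith
  rw [hco, Measure.map_linearMap_addHaar_eq_smul_addHaar volume (by rw [hdet]; norm_num), hdet]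
  norm_num


lemma rot_preserving {c d : ℝ} (h : c^2 + d^2 = 1) :
    MeasurePreserving (rot c d h) ((gaussianReal 0 1).prod (gaussianReal 0 1))
      ((gaussianReal 0 1).prod (gaussianReal 0 1)) := by
  refine ⟨(rot c d h).measurable, ?_⟩
  have hD : (fun p : ℝ×ℝ => gaussianPDF 0 1 p.1 * gaussianPDF 0 1 p.2) ∘ (rot c d h)
      = fun p : ℝ×ℝ => gaussianPDF 0 1 p.1 * gaussianPDF 0 1 p.2 := by
    funext p
    show gaussianPDF 0 1 (c*p.1+d*p.2) * gaussianPDF 0 1 (-d*p.1+c*p.2)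
      = gaussianPDF 0 1 p.1 * gaussianPDF 0 1 p.2
    simp only [gaussianPDF]
    rw [← ENNReal.ofReal_mul (gaussianPDFReal_nonneg _ _ _),
      ← ENNReal.ofReal_mul (gaussianPDFReal_nonneg _ _ _), pdf_mul, pdf_mul]
    have hq : (c*p.1+d*p.2)^2 + (-d*p.1+c*p.2)^2 = p.1^2 + p.2^2 := by
      linear_combination (p.1^2+p.2^2) * h
    rw [hq]
  have hDm : Measurable (fun p : ℝ×ℝ => gaussianPDF 0 1 p.1 * gaussianPDF 0 1 p.2) :=
    ((measurable_gaussianPDF 0 1).comp measurable_fst).mul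
      ((measurable_gaussianPDF 0 1).comp measurable_snd)
  rw [prod_gauss_eq]
  conv_lhs => rw [← hD]
  rw [map_withDensity _ _ hDm, rot_map_volume h]

lemma neg_pres : MeasurePreserving (fun x : ℝ => -x) (gaussianReal 0 1) (gaussianReal 0 1) := by
  refine ⟨measurable_neg, ?_⟩
  have h := gaussianReal_map_const_mul (μ := 0) (v := 1) (-1)
  have h2 : ((-1 : ℝ) * ·) = (fun x : ℝ => -x) := by funext x; simp
  have h3 : (⟨(-1:ℝ)^2, sq_nonneg _⟩ : NNReal) * 1 = 1 := by
    ext; norm_num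
  rw [h2] at h
  convert h using 2
  · norm_num
  · exact h3.symm

lemma refl2_pres : MeasurePreserving (fun p : ℝ×ℝ => (p.1, -p.2))
    ((gaussianReal 0 1).prod (gaussianReal 0 1))
    ((gaussianReal 0 1).prod (gaussianReal 0 1)) := by
  have := (MeasurePreserving.id (gaussianReal 0 1)).prod neg_pres
  exact this


lemma sign_mul_self (s : ℝ) : Real.sign s * s = |s| := by
  rcases lt_trichotomy s 0 with h|h|h
  · rw [Real.sign_of_neg h, abs_of_neg h]; ring
  · simp [h]
  · rw [Real.sign_of_pos h, abs_of_pos h]; ring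

lemma abs_sign_le (s : ℝ) : |Real.sign s| ≤ 1 := by
  rcases Real.sign_apply_eq s with h|h|h <;> rw [h] <;> norm_num

lemma int_abs : Integrable (fun x : ℝ => |x|) (gaussianReal 0 1) := by
  rw [gauss_eq, integrable_withDensity_iff (measurable_gaussianPDF 0 1)
    (ae_of_all _ fun x => ENNReal.ofReal_lt_top)]
  have h1 : Integrable (fun x : ℝ => x * rexp (-(2⁻¹ : ℝ) * x^2)) volume :=
    integrable_mul_exp_neg_mul_sq (by norm_num)
  have h2 := h1.abs.const_mul ((Real.sqrt (2*π))⁻¹)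
  refine h2.congr (ae_of_all _ fun x => ?_)
  simp only [gaussianPDF]
  rw [ENNReal.toReal_ofReal (gaussianPDFReal_nonneg _ _ _)]
  simp only [gaussianPDFReal, NNReal.coe_one, mul_one, sub_zero]
  rw [abs_mul, abs_of_pos (Real.exp_pos _)]
  rw [show -(2⁻¹ : ℝ) * x^2 = -x^2/2 by ring]
  ring

lemma int_sq : Integrable (fun x : ℝ => x^2) (gaussianReal 0 1) := by
  rw [gauss_eq, integrable_withDensity_iff (measurable_gaussianPDF 0 1)
    (ae_of_all _ fun x => ENNReal.ofReal_lt_top)]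
  have h1 : Integrable (fun x : ℝ => x ^ (2:ℝ) * rexp (-(2⁻¹ : ℝ) * x^2)) volume :=
    integrable_rpow_mul_exp_neg_mul_sq (by norm_num) (by norm_num)
  have h2 := h1.const_mul ((Real.sqrt (2*π))⁻¹)
  refine h2.congr (ae_of_all _ fun x => ?_)
  simp only [gaussianPDF]
  rw [ENNReal.toReal_ofReal (gaussianPDFReal_nonneg _ _ _)]
  simp only [gaussianPDFReal, NNReal.coe_one, mul_one, sub_zero]
  have hx : x ^ (2:ℝ) = x ^ (2:ℕ) := by
    rw [← Real.rpow_natCast x 2]; norm_num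
  rw [hx, show -(2⁻¹ : ℝ) * x^2 = -x^2/2 by ring]
  ring

lemma intF (A B : ℝ) : Integrable (fun p : ℝ×ℝ => |A*p.1 + B*p.2| * Real.sign p.1 * p.2)
    ((gaussianReal 0 1).prod (gaussianReal 0 1)) := by
  have hm : Measurable (fun p : ℝ×ℝ => |A*p.1 + B*p.2| * Real.sign p.1 * p.2) :=
    ((((measurable_fst.const_mul A).add (measurable_snd.const_mul B)).abs.mul
      (measurable_sign.comp measurable_fst)).mul measurable_snd)
  have hint : Integrable (fun p : ℝ×ℝ => |A| * (|p.1| * |p.2|) + |B| * p.2^2)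
      ((gaussianReal 0 1).prod (gaussianReal 0 1)) := by
    refine ((int_abs.mul_prod int_abs).const_mul _).add ?_
    have := ((integrable_const (1:ℝ) (μ := gaussianReal 0 1)).mul_prod int_sq).const_mul (|B|)
    simpa using this
  refine hint.mono' hm.aestronglyMeasurable (ae_of_all _ fun p => ?_)
  rw [Real.norm_eq_abs, abs_mul, abs_mul, abs_abs]
  have h1 : |A*p.1 + B*p.2| ≤ |A| * |p.1| + |B| * |p.2| :=
    (abs_add_le _ _).trans (by rw [abs_mul, abs_mul])
  have h2 := abs_sign_le p.1
  have h3 : |p.2| * |p.2| = p.2^2 := by rw [← abs_mul, abs_mul_self]; ring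
  have h4 : (0:ℝ) ≤ |A*p.1+B*p.2| := abs_nonneg _
  have h5 : (0:ℝ) ≤ |p.2| := abs_nonneg _
  have h6 : (0:ℝ) ≤ |Real.sign p.1| := abs_nonneg _
  have e1 : |A*p.1 + B*p.2| * |Real.sign p.1| ≤ |A| * |p.1| + |B| * |p.2| := by nlinarith
  have e2 : |A*p.1 + B*p.2| * |Real.sign p.1| * |p.2| ≤ (|A| * |p.1| + |B| * |p.2|) * |p.2| :=
    mul_le_mul_of_nonneg_right e1 h5
  have e3 : (|A| * |p.1| + |B| * |p.2|) * |p.2| = |A| * (|p.1| * |p.2|) + |B| * p.2^2 := by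
    rw [add_mul, mul_assoc, mul_assoc, h3]
  linarith [e2, e3]


def reflE : (ℝ×ℝ) ≃ᵐ (ℝ×ℝ) where
  toFun p := (p.1, -p.2)
  invFun p := (p.1, -p.2)
  left_inv p := by simp
  right_inv p := by simp
  measurable_toFun := by
    show Measurable fun p : ℝ×ℝ => (p.1, -p.2); fun_prop
  measurable_invFun := by
    show Measurable fun p : ℝ×ℝ => (p.1, -p.2); fun_prop

lemma reflE_pres : MeasurePreserving reflE
    ((gaussianReal 0 1).prod (gaussianReal 0 1))
    ((gaussianReal 0 1).prod (gaussianReal 0 1)) := by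
  have h := (MeasurePreserving.id (gaussianReal 0 1)).prod neg_pres
  have heq : ⇑reflE = Prod.map id (fun x : ℝ => -x) := funext fun p => rfl
  rw [heq]
  exact h

lemma gauss_singleton (a : ℝ) : (gaussianReal 0 1) {a} = 0 := by
  rw [gauss_eq]
  exact withDensity_absolutelyContinuous _ _ (measure_singleton a)

lemma null_axes : ((gaussianReal 0 1).prod (gaussianReal 0 1))
    {p : ℝ×ℝ | p.1 = 0 ∨ p.2 = 0} = 0 := by
  have hsub : {p : ℝ×ℝ | p.1 = 0 ∨ p.2 = 0}
      ⊆ ({0} ×ˢ Set.univ) ∪ (Set.univ ×ˢ {0}) := by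
    rintro ⟨a, b⟩ (h | h) <;> simp_all
  refine measure_mono_null hsub ?_
  refine le_antisymm ((measure_union_le _ _).trans ?_) zero_le
  rw [Measure.prod_prod, Measure.prod_prod, gauss_singleton]
  simp

lemma key (A B : ℝ) (hA : A ≠ 0) (hB : B ≠ 0) :
    (∫ p : ℝ×ℝ, |A * p.1 + B * p.2| * Real.sign p.1 * p.2
      ∂((gaussianReal 0 1).prod (gaussianReal 0 1))) ≠ 0 := by
  set μ := (gaussianReal 0 1).prod (gaussianReal 0 1) with hμ
  set ε : ℝ := if 0 < A*B then 1 else -1 with hε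
  have hεAB : 0 ≤ ε * (A*B) := by
    rcases lt_or_ge 0 (A*B) with h|h
    · rw [hε, if_pos h]; linarith
    · rw [hε, if_neg (not_lt.mpr h)]; linarith
  have hεAB' : 0 < ε * (A*B) := by
    rcases hεAB.lt_or_eq with h|h
    · exact h
    · exfalso
      rcases mul_eq_zero.mp h.symm with h2|h2
      · revert h2; rw [hε]; split <;> norm_num
      · exact (mul_ne_zero hA hB) h2
  set G : ℝ×ℝ → ℝ := fun p =>
    Real.sign p.1 * p.2 * (|A*p.1 + B*p.2| - |A*p.1 - B*p.2|) with hG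
  -- pointwise nonnegativity of ε * G
  have claim1 : ∀ p : ℝ×ℝ, 0 ≤ ε * G p := by
    intro ⟨s, t⟩
    by_cases hxy : |A*s + B*t| + |A*s - B*t| = 0
    · have h1 : |A*s + B*t| = 0 := by
        have := abs_nonneg (A*s + B*t); have := abs_nonneg (A*s - B*t); linarith
      have h2 : |A*s - B*t| = 0 := by
        have := abs_nonneg (A*s + B*t); have := abs_nonneg (A*s - B*t); linarith
      simp only [hG]
      rw [h1, h2]; simp
    · have hpos : 0 < |A*s + B*t| + |A*s - B*t| := by positivity
      have hkey : (ε * G (s, t)) * (|A*s + B*t| + |A*s - B*t|)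
          = 4 * (ε * (A*B)) * |s| * t^2 := by
        simp only [hG]
        have hd : (|A*s + B*t| - |A*s - B*t|) * (|A*s + B*t| + |A*s - B*t|)
            = (A*s + B*t)^2 - (A*s - B*t)^2 := by
          rw [← sq_abs (A*s + B*t), ← sq_abs (A*s - B*t)]; ring
        have hss := sign_mul_self s
        calc ε * (Real.sign s * t * (|A*s + B*t| - |A*s - B*t|)) * (|A*s + B*t| + |A*s - B*t|)
            = ε * (Real.sign s * t) * ((|A*s + B*t| - |A*s - B*t|) * (|A*s + B*t| + |A*s - B*t|)) := by ring
          _ = ε * (Real.sign s * t) * ((A*s + B*t)^2 - (A*s - B*t)^2) := by rw [hd]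
          _ = 4 * (ε * (A*B)) * (Real.sign s * s) * t^2 := by ring
          _ = 4 * (ε * (A*B)) * |s| * t^2 := by rw [hss]
      nlinarith [hkey, hpos, hεAB, abs_nonneg s, sq_nonneg t,
        mul_nonneg (mul_nonneg (mul_nonneg (by norm_num : (0:ℝ) ≤ 4) hεAB) (abs_nonneg s)) (sq_nonneg t)]
  have claim2 : ∀ p : ℝ×ℝ, p.1 ≠ 0 → p.2 ≠ 0 → 0 < ε * G p := by
    intro ⟨s, t⟩ hs ht
    have hsum : 0 < |A*s + B*t| + |A*s - B*t| := by
      rcases (abs_nonneg (A*s + B*t)).lt_or_eq with h|h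
      · have := abs_nonneg (A*s - B*t); linarith
      · rcases (abs_nonneg (A*s - B*t)).lt_or_eq with h2|h2
        · linarith
        · exfalso
          have e1 : A*s + B*t = 0 := abs_eq_zero.mp h.symm
          have e2 : A*s - B*t = 0 := abs_eq_zero.mp h2.symm
          have : A * s = 0 := by linarith
          rcases mul_eq_zero.mp this with h3|h3
          · exact hA h3
          · exact hs h3
    have hkey : (ε * G (s, t)) * (|A*s + B*t| + |A*s - B*t|)
        = 4 * (ε * (A*B)) * |s| * t^2 := by
      simp only [hG]
      have hd : (|A*s + B*t| - |A*s - B*t|) * (|A*s + B*t| + |A*s - B*t|)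
          = (A*s + B*t)^2 - (A*s - B*t)^2 := by
        rw [← sq_abs (A*s + B*t), ← sq_abs (A*s - B*t)]; ring
      have hss := sign_mul_self s
      calc ε * (Real.sign s * t * (|A*s + B*t| - |A*s - B*t|)) * (|A*s + B*t| + |A*s - B*t|)
          = ε * (Real.sign s * t) * ((|A*s + B*t| - |A*s - B*t|) * (|A*s + B*t| + |A*s - B*t|)) := by ring
        _ = ε * (Real.sign s * t) * ((A*s + B*t)^2 - (A*s - B*t)^2) := by rw [hd]
        _ = 4 * (ε * (A*B)) * (Real.sign s * s) * t^2 := by ring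
        _ = 4 * (ε * (A*B)) * |s| * t^2 := by rw [hss]
    have habs : 0 < |s| := abs_pos.mpr hs
    have ht2 : 0 < t^2 := by positivity
    nlinarith [hkey, hsum, mul_pos (mul_pos (mul_pos (by norm_num : (0:ℝ) < 4) hεAB') habs) ht2]
  -- integrability of G
  have hintF : Integrable (fun p : ℝ×ℝ => |A*p.1 + B*p.2| * Real.sign p.1 * p.2) μ := intF A B
  have hintF' : Integrable (fun p : ℝ×ℝ => |A*p.1 - B*p.2| * Real.sign p.1 * p.2) μ := by
    have := intF A (-B)
    refine this.congr (ae_of_all _ fun p => ?_)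
    show |A*p.1 + -B*p.2| * Real.sign p.1 * p.2 = |A*p.1 - B*p.2| * Real.sign p.1 * p.2
    rw [show A*p.1 + -B*p.2 = A*p.1 - B*p.2 by ring]
  have hintG : Integrable G μ := by
    have := hintF.sub hintF'
    refine this.congr (ae_of_all _ fun p => ?_)
    simp only [Pi.sub_apply, hG]; ring
  -- the reflection identity
  have hrefl : (∫ p : ℝ×ℝ, |A*p.1 + B*p.2| * Real.sign p.1 * p.2 ∂μ)
      = - ∫ p : ℝ×ℝ, |A*p.1 - B*p.2| * Real.sign p.1 * p.2 ∂μ := by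
    have h1 := reflE_pres.integral_comp reflE.measurableEmbedding
      (fun p : ℝ×ℝ => |A*p.1 + B*p.2| * Real.sign p.1 * p.2)
    rw [← h1]
    have : ∀ p : ℝ×ℝ, |A*(reflE p).1 + B*(reflE p).2| * Real.sign (reflE p).1 * (reflE p).2
        = -(|A*p.1 - B*p.2| * Real.sign p.1 * p.2) := by
      intro p
      show |A*p.1 + B*(-p.2)| * Real.sign p.1 * (-p.2) = _
      rw [show A*p.1 + B*(-p.2) = A*p.1 - B*p.2 by ring]; ring
    rw [integral_congr_ae (ae_of_all _ this), integral_neg]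
  -- conclude
  intro hI0
  have hI0' : (∫ p : ℝ×ℝ, |A*p.1 - B*p.2| * Real.sign p.1 * p.2 ∂μ) = 0 := by
    rw [hI0] at hrefl; linarith [hrefl]
  have hGint0 : (∫ p, G p ∂μ) = 0 := by
    have : (∫ p, G p ∂μ) = (∫ p : ℝ×ℝ, |A*p.1 + B*p.2| * Real.sign p.1 * p.2 ∂μ)
        - ∫ p : ℝ×ℝ, |A*p.1 - B*p.2| * Real.sign p.1 * p.2 ∂μ := by
      rw [← integral_sub hintF hintF']
      refine integral_congr_ae (ae_of_all _ fun p => ?_)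
      simp only [hG]; ring
    rw [this, hI0, hI0']; ring
  have hεGpos : 0 < ∫ p, ε * G p ∂μ := by
    rw [integral_pos_iff_support_of_nonneg_ae (ae_of_all _ claim1) (hintG.const_mul ε)]
    have hsub : {p : ℝ×ℝ | p.1 ≠ 0 ∧ p.2 ≠ 0} ⊆ Function.support (fun p => ε * G p) := by
      rintro ⟨s, t⟩ ⟨hs, ht⟩
      exact (claim2 (s, t) hs ht).ne'
    refine lt_of_lt_of_le ?_ (measure_mono hsub)
    have hcompl : {p : ℝ×ℝ | p.1 ≠ 0 ∧ p.2 ≠ 0} = {p : ℝ×ℝ | p.1 = 0 ∨ p.2 = 0}ᶜ := by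
      ext p; simp [not_or]
    rw [hcompl]
    have : μ {p : ℝ×ℝ | p.1 = 0 ∨ p.2 = 0}ᶜ = 1 := by
      rw [measure_compl ?_ (measure_ne_top _ _), null_axes]
      · simp
      · have : {p : ℝ×ℝ | p.1 = 0 ∨ p.2 = 0}
            = ({0} ×ˢ Set.univ) ∪ (Set.univ ×ˢ {0}) := by
          ext ⟨a,b⟩; simp [eq_comm]
        rw [this]
        exact ((MeasurableSet.singleton 0).prod MeasurableSet.univ).union
          (MeasurableSet.univ.prod (MeasurableSet.singleton 0))
    rw [this]; norm_num
  rw [integral_const_mul, hGint0, mul_zero] at hεGpos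
  exact lt_irrefl _ hεGpos


lemma int_sq_fst : Integrable (fun p : ℝ×ℝ => p.1^2)
    ((gaussianReal 0 1).prod (gaussianReal 0 1)) := by
  have := int_sq.mul_prod (integrable_const (1:ℝ) (μ := gaussianReal 0 1))
  simpa using this

lemma int_sq_snd : Integrable (fun p : ℝ×ℝ => p.2^2)
    ((gaussianReal 0 1).prod (gaussianReal 0 1)) := by
  have := (integrable_const (1:ℝ) (μ := gaussianReal 0 1)).mul_prod int_sq
  simpa using this

lemma intH (a₁ a₂ b₁ b₂ c₁ c₂ : ℝ) :
    Integrable (fun p : ℝ×ℝ =>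
      |a₁*p.1 + a₂*p.2| * Real.sign (b₁*p.1 + b₂*p.2) * (c₁*p.1 + c₂*p.2))
      ((gaussianReal 0 1).prod (gaussianReal 0 1)) := by
  have hm : Measurable (fun p : ℝ×ℝ =>
      |a₁*p.1 + a₂*p.2| * Real.sign (b₁*p.1 + b₂*p.2) * (c₁*p.1 + c₂*p.2)) := by
    refine Measurable.mul (Measurable.mul ?_ ?_) ?_
    · exact ((measurable_fst.const_mul a₁).add (measurable_snd.const_mul a₂)).abs
    · exact measurable_sign.comp ((measurable_fst.const_mul b₁).add (measurable_snd.const_mul b₂))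
    · exact (measurable_fst.const_mul c₁).add (measurable_snd.const_mul c₂)
  have hint : Integrable (fun p : ℝ×ℝ =>
      (|a₁| * |c₁|) * p.1^2 + (|a₁| * |c₂| + |a₂| * |c₁|) * (|p.1| * |p.2|)
        + (|a₂| * |c₂|) * p.2^2) ((gaussianReal 0 1).prod (gaussianReal 0 1)) := by
    exact ((int_sq_fst.const_mul _).add ((int_abs.mul_prod int_abs).const_mul _)).add
      (int_sq_snd.const_mul _)
  refine hint.mono' hm.aestronglyMeasurable (ae_of_all _ fun p => ?_)
  rw [Real.norm_eq_abs, abs_mul, abs_mul, abs_abs]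
  have e1 : |a₁*p.1 + a₂*p.2| ≤ |a₁| * |p.1| + |a₂| * |p.2| :=
    (abs_add_le _ _).trans (by rw [abs_mul, abs_mul])
  have e2 : |c₁*p.1 + c₂*p.2| ≤ |c₁| * |p.1| + |c₂| * |p.2| :=
    (abs_add_le _ _).trans (by rw [abs_mul, abs_mul])
  have e3 := abs_sign_le (b₁*p.1 + b₂*p.2)
  have h4 : (0:ℝ) ≤ |a₁*p.1 + a₂*p.2| := abs_nonneg _
  have h6 : (0:ℝ) ≤ |Real.sign (b₁*p.1 + b₂*p.2)| := abs_nonneg _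
  have t1 : |a₁*p.1 + a₂*p.2| * |Real.sign (b₁*p.1 + b₂*p.2)| ≤ |a₁| * |p.1| + |a₂| * |p.2| := by
    nlinarith
  have t2 : |a₁*p.1 + a₂*p.2| * |Real.sign (b₁*p.1 + b₂*p.2)| * |c₁*p.1 + c₂*p.2|
      ≤ (|a₁| * |p.1| + |a₂| * |p.2|) * (|c₁| * |p.1| + |c₂| * |p.2|) :=
    mul_le_mul t1 e2 (abs_nonneg _) (by positivity)
  have h11 : |p.1| * |p.1| = p.1^2 := by rw [← abs_mul, abs_mul_self]; ring
  have h22 : |p.2| * |p.2| = p.2^2 := by rw [← abs_mul, abs_mul_self]; ring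
  have e4 : (|a₁| * |p.1| + |a₂| * |p.2|) * (|c₁| * |p.1| + |c₂| * |p.2|)
      = (|a₁| * |c₁|) * p.1^2 + (|a₁| * |c₂| + |a₂| * |c₁|) * (|p.1| * |p.2|)
        + (|a₂| * |c₂|) * p.2^2 := by
    linear_combination (|a₁| * |c₁|) * h11 + (|a₂| * |c₂|) * h22
  linarith [t2, e4.le, e4.ge]

lemma sign_rmul {r : ℝ} (hr : 0 < r) (z : ℝ) : Real.sign (r * z) = Real.sign z := by
  rcases lt_trichotomy z 0 with h|h|h
  · rw [Real.sign_of_neg h, Real.sign_of_neg (mul_neg_of_pos_of_neg hr h)]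
  · simp [h]
  · rw [Real.sign_of_pos h, Real.sign_of_pos (mul_pos hr h)]


lemma intMaj (k1 k2 : ℝ) :
    Integrable (fun p : ℝ×ℝ => (k1 * |p.1| + k2 * |p.2|) * (|p.1| + |p.2|))
      ((gaussianReal 0 1).prod (gaussianReal 0 1)) := by
  have hint : Integrable (fun p : ℝ×ℝ =>
      k1 * p.1^2 + (k1 + k2) * (|p.1| * |p.2|) + k2 * p.2^2)
      ((gaussianReal 0 1).prod (gaussianReal 0 1)) :=
    ((int_sq_fst.const_mul _).add ((int_abs.mul_prod int_abs).const_mul _)).add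
      (int_sq_snd.const_mul _)
  refine hint.congr (ae_of_all _ fun p => ?_)
  have h11 : |p.1| * |p.1| = p.1^2 := by rw [← abs_mul, abs_mul_self]; ring
  have h22 : |p.2| * |p.2| = p.2^2 := by rw [← abs_mul, abs_mul_self]; ring
  show k1 * p.1^2 + (k1 + k2) * (|p.1| * |p.2|) + k2 * p.2^2
      = (k1 * |p.1| + k2 * |p.2|) * (|p.1| + |p.2|)
  linear_combination (-k1) * h11 + (-k2) * h22

end Stmt17

open Stmt17 in
/-- In dimension 2, for `S = vvᵀ` with `v ≠ 0`, any fixed point `u` of the population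
map `u ↦ 𝔼[|vᵀx| sign(uᵀx) x]` (for standard Gaussian `x`) that is not orthogonal to
`v` must be parallel to `v`. -/
theorem stmt17 (u v : Fin 2 → ℝ) (hv : v ≠ 0) (hu : u ≠ 0)
    (hfix : (∫ x : Fin 2 → ℝ,
        (|v ⬝ᵥ x| * Real.sign (u ⬝ᵥ x)) • x
        ∂(MeasureTheory.Measure.pi fun _ => gaussianReal 0 1)) = u)
    (hnotorth : u ⬝ᵥ v ≠ 0) :
    ∃ c : ℝ, u = c • v := by
  classical
  have hdot : ∀ (a x : Fin 2 → ℝ), a ⬝ᵥ x = a 0 * x 0 + a 1 * x 1 := fun a x => by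
    simp [dotProduct, Fin.sum_univ_two]
  rw [hdot] at hnotorth
  simp only [hdot] at hfix
  set μ2 : Measure (Fin 2 → ℝ) := Measure.pi fun _ => gaussianReal 0 1 with hμ2
  set ν : Measure (ℝ×ℝ) := (gaussianReal 0 1).prod (gaussianReal 0 1) with hν
  have hmp : MeasurePreserving (MeasurableEquiv.piFinTwo fun _ : Fin 2 => ℝ) μ2 ν :=
    measurePreserving_piFinTwo _
  set e := MeasurableEquiv.piFinTwo fun _ : Fin 2 => ℝ with he
  -- basic scalars
  have hu01 : u 0 ≠ 0 ∨ u 1 ≠ 0 := by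
    by_contra h; push_neg at h
    exact hu (funext fun i => by fin_cases i <;> simp [h.1, h.2])
  set r : ℝ := Real.sqrt (u 0^2 + u 1^2) with hrdef
  have hr2 : r^2 = u 0^2 + u 1^2 := Real.sq_sqrt (by positivity)
  have hr : 0 < r := Real.sqrt_pos.mpr (by rcases hu01 with h|h <;> positivity)
  set c : ℝ := u 0 / r with hcdef
  set d : ℝ := u 1 / r with hddef
  have hcd : c^2 + d^2 = 1 := by
    rw [hcdef, hddef]
    field_simp
    linarith [hr2]
  have hrc : r * c = u 0 := by rw [hcdef]; field_simp
  have hrd : r * d = u 1 := by rw [hddef]; field_simp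
  set A : ℝ := c * v 0 + d * v 1 with hA
  set B : ℝ := -d * v 0 + c * v 1 with hB
  have hrA : r * A = u 0 * v 0 + u 1 * v 1 := by
    rw [hA]; linear_combination v 0 * hrc + v 1 * hrd
  have hAne : A ≠ 0 := by
    intro h0
    apply hnotorth
    rw [← hrA, h0, mul_zero]
  -- the scalar weight function
  set f : (Fin 2 → ℝ) → ℝ :=
    fun x => |v 0 * x 0 + v 1 * x 1| * Real.sign (u 0 * x 0 + u 1 * x 1) with hf
  have m1 : Measurable (fun x : Fin 2 → ℝ => v 0 * x 0 + v 1 * x 1) := by fun_prop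
  have m2 : Measurable (fun x : Fin 2 → ℝ => u 0 * x 0 + u 1 * x 1) := by fun_prop
  have hfm : Measurable f := (m1.abs).mul (measurable_sign.comp m2)
  -- scalar integrability on μ2
  have hints : ∀ (a b : ℝ), Integrable (fun x : Fin 2 → ℝ =>
      f x * (a * x 0 + b * x 1)) μ2 := by
    intro a b
    have h := intH (v 0) (v 1) (u 0) (u 1) a b
    have h2 := (hmp.integrable_comp_emb e.measurableEmbedding (g := fun p : ℝ×ℝ =>
      |v 0 * p.1 + v 1 * p.2| * Real.sign (u 0 * p.1 + u 1 * p.2) * (a * p.1 + b * p.2))).mpr h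
    exact h2
  have hInt0 : Integrable (fun x : Fin 2 → ℝ => f x * x 0) μ2 := by
    refine (hints 1 0).congr (ae_of_all _ fun x => ?_)
    show f x * (1 * x 0 + 0 * x 1) = f x * x 0
    ring
  have hInt1 : Integrable (fun x : Fin 2 → ℝ => f x * x 1) μ2 := by
    refine (hints 0 1).congr (ae_of_all _ fun x => ?_)
    show f x * (0 * x 0 + 1 * x 1) = f x * x 1
    ring
  -- vector integrability
  set Φ : (Fin 2 → ℝ) → (Fin 2 → ℝ) := fun x => f x • x with hΦ
  have hΦmeas : Measurable Φ :=
    measurable_pi_iff.mpr fun i => hfm.mul (measurable_pi_apply i)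
  have hmaj : Integrable (fun x : Fin 2 → ℝ =>
      (|v 0| * |x 0| + |v 1| * |x 1|) * (|x 0| + |x 1|)) μ2 :=
    (hmp.integrable_comp_emb e.measurableEmbedding (g := fun p : ℝ×ℝ =>
      (|v 0| * |p.1| + |v 1| * |p.2|) * (|p.1| + |p.2|))).mpr (intMaj _ _)
  have hfb : ∀ x : Fin 2 → ℝ, |f x| ≤ |v 0| * |x 0| + |v 1| * |x 1| := by
    intro x
    rw [hf]
    have e1 : |v 0 * x 0 + v 1 * x 1| ≤ |v 0| * |x 0| + |v 1| * |x 1| :=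
      (abs_add_le _ _).trans (by rw [abs_mul, abs_mul])
    have e3 := abs_sign_le (u 0 * x 0 + u 1 * x 1)
    rw [abs_mul, abs_abs]
    nlinarith [abs_nonneg (v 0 * x 0 + v 1 * x 1),
      abs_nonneg (Real.sign (u 0 * x 0 + u 1 * x 1))]
  have hΦint : Integrable Φ μ2 := by
    refine hmaj.mono' hΦmeas.aestronglyMeasurable (ae_of_all _ fun x => ?_)
    rw [pi_norm_le_iff_of_nonneg (by positivity)]
    intro i
    have hxi : |x i| ≤ |x 0| + |x 1| := by
      fin_cases i
      · show |x 0| ≤ |x 0| + |x 1|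
        linarith [abs_nonneg (x 1)]
      · show |x 1| ≤ |x 0| + |x 1|
        linarith [abs_nonneg (x 0)]
    have : ‖Φ x i‖ = |f x| * |x i| := by
      show ‖f x * x i‖ = _
      rw [Real.norm_eq_abs, abs_mul]
    rw [this]
    exact mul_le_mul (hfb x) hxi (abs_nonneg _) (by positivity)
  -- components of the fixed point equation
  have hcomp : ∀ i : Fin 2, (∫ x, f x * x i ∂μ2) = u i := by
    intro i
    have h := (ContinuousLinearMap.proj (R := ℝ) (φ := fun _ : Fin 2 => ℝ) i).integral_comp_comm
      hΦint
    rw [hfix] at h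
    exact h
  -- the orthogonality equation
  have hkey0 : (∫ x, f x * (-(u 1) * x 0 + u 0 * x 1) ∂μ2) = 0 := by
    have hsplit : (∫ x, f x * (-(u 1) * x 0 + u 0 * x 1) ∂μ2)
        = -(u 1) * (∫ x, f x * x 0 ∂μ2) + u 0 * (∫ x, f x * x 1 ∂μ2) := by
      rw [← integral_const_mul, ← integral_const_mul,
        ← integral_add ((hInt0.const_mul _)) ((hInt1.const_mul _))]
      refine integral_congr_ae (ae_of_all _ fun x => ?_)
      show f x * (-(u 1) * x 0 + u 0 * x 1) = -(u 1) * (f x * x 0) + u 0 * (f x * x 1)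
      ring
    rw [hsplit, hcomp 0, hcomp 1]
    ring
  -- transfer to the product space
  have hkeyν : (∫ p : ℝ×ℝ, |v 0 * p.1 + v 1 * p.2| * Real.sign (u 0 * p.1 + u 1 * p.2)
      * (-(u 1) * p.1 + u 0 * p.2) ∂ν) = 0 := by
    have h := hmp.integral_comp e.measurableEmbedding (fun p : ℝ×ℝ =>
      |v 0 * p.1 + v 1 * p.2| * Real.sign (u 0 * p.1 + u 1 * p.2)
        * (-(u 1) * p.1 + u 0 * p.2))
    rw [← h]
    exact hkey0
  -- rotate
  have hrot := (rot_preserving hcd).integral_comp (rot c d hcd).measurableEmbedding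
    (fun q : ℝ×ℝ => |A * q.1 + B * q.2| * Real.sign (r * q.1) * (r * q.2))
  have hgeq : ∀ p : ℝ×ℝ, |A * (rot c d hcd p).1 + B * (rot c d hcd p).2|
      * Real.sign (r * (rot c d hcd p).1) * (r * (rot c d hcd p).2)
      = |v 0 * p.1 + v 1 * p.2| * Real.sign (u 0 * p.1 + u 1 * p.2)
        * (-(u 1) * p.1 + u 0 * p.2) := by
    intro p
    have h1 : A * (rot c d hcd p).1 + B * (rot c d hcd p).2 = v 0 * p.1 + v 1 * p.2 := by
      show A * (c*p.1 + d*p.2) + B * (-d*p.1 + c*p.2) = v 0 * p.1 + v 1 * p.2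
      rw [hA, hB]
      linear_combination (v 0 * p.1 + v 1 * p.2) * hcd
    have h2 : r * (rot c d hcd p).1 = u 0 * p.1 + u 1 * p.2 := by
      show r * (c*p.1 + d*p.2) = u 0 * p.1 + u 1 * p.2
      linear_combination p.1 * hrc + p.2 * hrd
    have h3 : r * (rot c d hcd p).2 = -(u 1) * p.1 + u 0 * p.2 := by
      show r * (-d*p.1 + c*p.2) = -(u 1) * p.1 + u 0 * p.2
      linear_combination (-p.1) * hrd + p.2 * hrc
    rw [h1, h2, h3]
  have hIr : (∫ q : ℝ×ℝ, |A * q.1 + B * q.2| * Real.sign (r * q.1) * (r * q.2) ∂ν) = 0 := by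
    rw [← hrot]
    rw [integral_congr_ae (ae_of_all _ hgeq)]
    exact hkeyν
  have hIF : (∫ q : ℝ×ℝ, |A * q.1 + B * q.2| * Real.sign q.1 * q.2 ∂ν) = 0 := by
    have heq : (fun q : ℝ×ℝ => |A * q.1 + B * q.2| * Real.sign (r * q.1) * (r * q.2))
        = fun q => r * (|A * q.1 + B * q.2| * Real.sign q.1 * q.2) := by
      funext q; rw [sign_rmul hr]; ring
    rw [heq, integral_const_mul] at hIr
    rcases mul_eq_zero.mp hIr with h|h
    · exact absurd h hr.ne'
    · exact h
  have hBzero : B = 0 := by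
    by_contra hBne
    exact key A B hAne hBne hIF
  -- final algebra
  have hrel : u 0 * v 1 = u 1 * v 0 := by
    have hrB : r * B = -(u 1) * v 0 + u 0 * v 1 := by
      rw [hB]; linear_combination (-(v 0)) * hrd + v 1 * hrc
    rw [hBzero, mul_zero] at hrB
    linarith
  rcases ne_or_eq (v 0) 0 with h0|h0
  · refine ⟨u 0 / v 0, funext fun i => ?_⟩
    fin_cases i
    · show u 0 = u 0 / v 0 * v 0
      field_simp
    · show u 1 = u 0 / v 0 * v 1
      field_simp
      linarith [hrel]
  · have hv1 : v 1 ≠ 0 := by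
      intro h1; exact hv (funext fun i => by fin_cases i <;> simp [h0, h1])
    have hu0 : u 0 = 0 := by
      have hz : u 0 * v 1 = 0 := by rw [hrel, h0, mul_zero]
      rcases mul_eq_zero.mp hz with h|h
      · exact h
      · exact absurd h hv1
    refine ⟨u 1 / v 1, funext fun i => ?_⟩
    fin_cases i
    · show u 0 = u 1 / v 1 * v 0
      rw [hu0, h0, mul_zero]
    · show u 1 = u 1 / v 1 * v 1
      field_simp
end
end
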